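/- Let γ > 0 and let f be as above (the autoconvolution of g(x) = max(γ² − x², 0)). For every z ∈ ℂ with z ≠ 0, the Laplace transform satisfies F(z) = (16γ⁵/15)·z⁻¹ − (8γ³/3)·z⁻³ + 4γ²·(1 + e^{−2γz})·z⁻⁴ + 4·z⁻⁶·(−1 + e^{−2γz} + 2γz·e^{−2γz}). -/

import Mathlib

open MeasureTheory

set_option maxHeartbeats 1000000

private lemma poly_hasDerivAt (b0 b1 b2 b3 b4 b5 w : ℂ) :
    HasDerivAt (fun w : ℂ => b0 + b1 * w + b2 * w ^ 2 + b3 * w ^ 3 + b4 * w ^ 4 + b5 * w ^ 5)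
      (b1 + 2 * b2 * w + 3 * b3 * w ^ 2 + 4 * b4 * w ^ 3 + 5 * b5 * w ^ 4) w := by
  have h := (((((hasDerivAt_const w b0).add ((hasDerivAt_id w).const_mul b1)).add
      ((hasDerivAt_pow 2 w).const_mul b2)).add ((hasDerivAt_pow 3 w).const_mul b3)).add
      ((hasDerivAt_pow 4 w).const_mul b4)).add ((hasDerivAt_pow 5 w).const_mul b5)
  exact h.congr_deriv (by push_cast; ring)



theorem laplace_transform_formula (γ : ℝ) (hγ : 0 < γ)
    (f : ℝ → ℝ)
    (hf : ∀ t : ℝ, 0 ≤ t → t < 2 * γ →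
      f t = -t ^ 5 / 30 + (2 * γ ^ 2 / 3) * t ^ 3 - (4 * γ ^ 3 / 3) * t ^ 2
        + 16 * γ ^ 5 / 15)
    (hf0 : ∀ t : ℝ, 2 * γ ≤ t → f t = 0)
    (F : ℂ → ℂ)
    (hF : ∀ z : ℂ, F z = ∫ t in Set.Ioi (0 : ℝ), Complex.exp (-z * t) * (f t : ℂ)) :
    ∀ z : ℂ, z ≠ 0 →
      F z = (16 * (γ : ℂ) ^ 5 / 15) / z - (8 * (γ : ℂ) ^ 3 / 3) / z ^ 3
        + 4 * (γ : ℂ) ^ 2 * (1 + Complex.exp (-2 * γ * z)) / z ^ 4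
        + 4 / z ^ 6 * (-1 + Complex.exp (-2 * γ * z)
            + 2 * γ * z * Complex.exp (-2 * γ * z)) := by
  intro z hz
  have h2γ : (0:ℝ) ≤ 2 * γ := by positivity
  rw [hF z]
  set P : ℝ → ℂ := fun t => -(t:ℂ) ^ 5 / 30 + (2 * (γ:ℂ) ^ 2 / 3) * (t:ℂ) ^ 3
      - (4 * (γ:ℂ) ^ 3 / 3) * (t:ℂ) ^ 2 + 16 * (γ:ℂ) ^ 5 / 15 with hPdef
  have hfg : Set.EqOn (fun t : ℝ => Complex.exp (-z * t) * (f t : ℂ))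
      (fun t : ℝ => Complex.exp (-z * t) * P t) (Set.Ioc 0 (2*γ)) := by
    intro t ht
    rcases eq_or_lt_of_le ht.2 with h | h
    · subst h
      beta_reduce
      rw [hf0 _ le_rfl]
      have hP0 : P (2*γ) = 0 := by simp only [hPdef]; push_cast; ring
      simp [hP0]
    · beta_reduce
      rw [hf t ht.1.le h]
      simp only [hPdef]
      push_cast
      ring
  have hcont : Continuous fun t : ℝ => Complex.exp (-z * t) * P t := by
    simp only [hPdef]
    fun_prop
  have hI1 : IntegrableOn (fun t : ℝ => Complex.exp (-z * t) * (f t : ℂ))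
      (Set.Ioc 0 (2*γ)) :=
    (hcont.integrableOn_Ioc).congr_fun (fun t ht => (hfg ht).symm) measurableSet_Ioc
  have heq2 : Set.EqOn (fun t : ℝ => Complex.exp (-z * t) * (f t : ℂ))
      (fun _ : ℝ => (0:ℂ)) (Set.Ioi (2*γ)) := by
    intro t ht
    simp [hf0 t (le_of_lt ht)]
  have hI2 : IntegrableOn (fun t : ℝ => Complex.exp (-z * t) * (f t : ℂ))
      (Set.Ioi (2*γ)) :=
    (integrableOn_zero).congr_fun (fun t ht => (heq2 ht).symm) measurableSet_Ioi
  have hsplit : ∫ t in Set.Ioi (0:ℝ), Complex.exp (-z * t) * (f t : ℂ)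
      = (∫ t in Set.Ioc 0 (2*γ), Complex.exp (-z * t) * (f t : ℂ))
        + ∫ t in Set.Ioi (2*γ), Complex.exp (-z * t) * (f t : ℂ) := by
    rw [← setIntegral_union (Set.Ioc_disjoint_Ioi le_rfl) measurableSet_Ioi hI1 hI2,
      Set.Ioc_union_Ioi_eq_Ioi h2γ]
  have hzero : ∫ t in Set.Ioi (2*γ), Complex.exp (-z * t) * (f t : ℂ) = 0 := by
    rw [setIntegral_congr_fun measurableSet_Ioi heq2, integral_zero]
  rw [hsplit, hzero, add_zero, setIntegral_congr_fun measurableSet_Ioc hfg,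
    ← intervalIntegral.integral_of_le h2γ]
  set b5 : ℂ := 1/(30*z) with hb5
  set b4 : ℂ := 1/(6*z^2) with hb4
  set b3 : ℂ := -2*(γ:ℂ)^2/(3*z) + 2/(3*z^3) with hb3
  set b2 : ℂ := 4*(γ:ℂ)^3/(3*z) - 2*(γ:ℂ)^2/z^2 + 2/z^4 with hb2
  set b1 : ℂ := 8*(γ:ℂ)^3/(3*z^2) - 4*(γ:ℂ)^2/z^3 + 4/z^5 with hb1
  set b0 : ℂ := -16*(γ:ℂ)^5/(15*z) + 8*(γ:ℂ)^3/(3*z^3) - 4*(γ:ℂ)^2/z^4 + 4/z^6 with hb0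
  set G : ℝ → ℂ := fun t => Complex.exp (-z * t) *
    (b0 + b1*(t:ℂ) + b2*(t:ℂ)^2 + b3*(t:ℂ)^3 + b4*(t:ℂ)^4 + b5*(t:ℂ)^5) with hG
  have hderiv : ∀ t ∈ Set.uIcc (0:ℝ) (2*γ),
      HasDerivAt G (Complex.exp (-z * t) * P t) t := by
    intro t _
    have hkey : (-z) * (b0 + b1*(t:ℂ) + b2*(t:ℂ)^2 + b3*(t:ℂ)^3 + b4*(t:ℂ)^4 + b5*(t:ℂ)^5)
        + (b1 + 2*b2*(t:ℂ) + 3*b3*(t:ℂ)^2 + 4*b4*(t:ℂ)^3 + 5*b5*(t:ℂ)^4) = P t := by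
      have hu : z * z⁻¹ = 1 := mul_inv_cancel₀ hz
      simp only [hPdef, hb0, hb1, hb2, hb3, hb4, hb5]
      linear_combination ((-(t:ℂ)^5/30 + 2*(γ:ℂ)^2/3*(t:ℂ)^3 - 4*(γ:ℂ)^3/3*(t:ℂ)^2 + 16*(γ:ℂ)^5/15)
        + (-(t:ℂ)^4/6 + 2*(γ:ℂ)^2*(t:ℂ)^2 - 8*(γ:ℂ)^3*(t:ℂ)/3) * z⁻¹
        + (-2*(t:ℂ)^3/3 + 4*(γ:ℂ)^2*(t:ℂ) - 8*(γ:ℂ)^3/3) * z⁻¹^2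
        + (-2*(t:ℂ)^2 + 4*(γ:ℂ)^2) * z⁻¹^3
        + (-4*(t:ℂ)) * z⁻¹^4 + (-4) * z⁻¹^5) * hu
    have h1 := ((((hasDerivAt_id (t:ℂ)).const_mul (-z)).cexp).mul
      (poly_hasDerivAt b0 b1 b2 b3 b4 b5 (t:ℂ))).comp_ofReal
    simp only [id_eq] at h1
    exact h1.congr_deriv (by linear_combination (Complex.exp (-z * (t:ℂ))) * hkey)
  rw [intervalIntegral.integral_eq_sub_of_hasDerivAt hderiv (hcont.intervalIntegrable _ _)]
  simp only [hG]
  have harg : -z * ((2*γ:ℝ):ℂ) = -2*(γ:ℂ)*z := by push_cast; ring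
  rw [harg]
  push_cast
  rw [show -z * (0:ℂ) = 0 by ring, Complex.exp_zero]
  have hu : z * z⁻¹ = 1 := mul_inv_cancel₀ hz
  simp only [hb0, hb1, hb2, hb3, hb4, hb5]
  linear_combination (-(8:ℂ)*(γ:ℂ)*Complex.exp (-2*(γ:ℂ)*z)*z⁻¹^5) * hu
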